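/- Let I be a bounded interval, V ⊂ H Hilbert spaces with V compactly embedded in H, k ≥ 0, 1 ≤ p ≤ ∞ and 1 ≤ q ≤ p with q < ∞. Then the embedding W^{k,p}(I; V) ∩ W^{k+1,p}(I; H) ↪ W^{k,q}(I; H) is compact, and the embedding W^{k,∞}(I; V) ∩ W^{k+1,∞}(I; H) ↪ C^k(I; H) is compact. -/

import Mathlib

open Set MeasureTheory Filter
open scoped ENNReal

open scoped NNReal Topology
open intervalIntegral UniformSpace

set_option linter.unusedSectionVars false

section aux
variable {E F G : Type*} [NormedAddCommGroup E] [NormedSpace ℝ E]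
  [NormedAddCommGroup F] [NormedSpace ℝ F] [NormedAddCommGroup G] [NormedSpace ℝ G]

lemma aux_ae_to_pointwise {T : ℝ} (hT : 0 < T) {g : ℝ → E} (hg : Continuous g) {c : ℝ}
    (h : ∀ᵐ t ∂(volume.restrict (Ioo (0:ℝ) T)), ‖g t‖ ≤ c) :
    ∀ t ∈ Icc (0:ℝ) T, ‖g t‖ ≤ c := by
  have h1 : Ioo (0:ℝ) T ⊆ {s : ℝ | ‖g s‖ ≤ c} := by
    intro t ht
    by_contra hlt
    simp only [mem_setOf_eq, not_le] at hlt
    have hAopen : IsOpen {s : ℝ | c < ‖g s‖} := isOpen_lt continuous_const hg.norm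
    have hpos : 0 < volume ({s : ℝ | c < ‖g s‖} ∩ Ioo 0 T) :=
      (hAopen.inter isOpen_Ioo).measure_pos volume ⟨t, hlt, ht⟩
    rw [ae_restrict_iff' measurableSet_Ioo, ae_iff] at h
    apply hpos.ne'
    rw [← nonpos_iff_eq_zero, ← h]
    apply measure_mono
    intro s hs
    simp only [mem_setOf_eq, Classical.not_imp, not_le]
    exact ⟨hs.2, hs.1⟩
  intro t ht
  have hcl : Icc (0:ℝ) T ⊆ {s : ℝ | ‖g s‖ ≤ c} := by
    rw [← closure_Ioo hT.ne]
    exact closure_minimal h1 (isClosed_le hg.norm continuous_const)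
  exact hcl ht

lemma aux_clm_iteratedDeriv (L : F →L[ℝ] G) {f : ℝ → F} {n : WithTop ℕ∞} {i : ℕ}
    (hf : ContDiff ℝ n f) (hi : (i : WithTop ℕ∞) ≤ n) :
    iteratedDeriv i (fun t => L (f t)) = fun t => L (iteratedDeriv i f t) := by
  funext x
  have h1 := L.iteratedFDeriv_comp_left (hf.contDiffAt (x := x)) hi
  rw [iteratedDeriv_eq_iteratedFDeriv, iteratedDeriv_eq_iteratedFDeriv]
  have : (fun t => L (f t)) = (⇑L ∘ f) := rfl
  rw [this, h1]
  rfl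

lemma aux_L1_bound {T : ℝ} (hT : 0 < T) {p : ℝ≥0∞} (hp : 1 ≤ p) {M : ℝ≥0∞} (hM : M ≠ ⊤)
    {g : ℝ → E} (hg : Continuous g)
    (h : eLpNorm g p (volume.restrict (Ioo (0:ℝ) T)) ≤ M) :
    ∀ a b : ℝ, 0 ≤ a → a ≤ b → b ≤ T →
      ∫ t in a..b, ‖g t‖ ≤ (M * (ENNReal.ofReal T) ^ (1 - p.toReal⁻¹)).toReal := by
  intro a b ha hab hbT
  set μ := volume.restrict (Ioo (0:ℝ) T) with hμ
  set R : ℝ≥0∞ := M * (ENNReal.ofReal T) ^ (1 - p.toReal⁻¹) with hR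
  have hRfin : R ≠ ⊤ := by
    apply ENNReal.mul_ne_top hM
    exact ENNReal.rpow_ne_top_of_nonneg (by
      rcases eq_or_ne p ⊤ with hptop | hptop
      · simp [hptop]
      · have h1 : 1 ≤ p.toReal := by
          rw [← ENNReal.toReal_one]
          exact ENNReal.toReal_mono hptop hp
        have : p.toReal⁻¹ ≤ 1 := by
          rw [inv_le_one_iff₀]; right; linarith
        linarith) (by simp)
  have h1 : eLpNorm g 1 μ ≤ R := by
    have h2 := eLpNorm_le_eLpNorm_mul_rpow_measure_univ (p := 1) (q := p) (μ := μ) (f := g) hp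
      hg.aestronglyMeasurable
    have hμu : μ Set.univ = ENNReal.ofReal T := by
      rw [hμ, Measure.restrict_apply MeasurableSet.univ, Set.univ_inter, Real.volume_Ioo, sub_zero]
    rw [hμu] at h2
    refine h2.trans ?_
    rw [hR]
    have : (1:ℝ)/(1:ℝ≥0∞).toReal - 1/p.toReal = 1 - p.toReal⁻¹ := by
      simp [one_div]
    rw [this]
    exact mul_le_mul_left h _
  have hint : IntegrableOn g (Ioc a b) volume :=
    (hg.integrableOn_Icc (a := a) (b := b)).mono_set Ioc_subset_Icc_self
  have h2 : ENNReal.ofReal (∫ t in a..b, ‖g t‖) = ∫⁻ t in Ioc a b, ‖g t‖₊ := by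
    rw [integral_of_le hab]; exact ofReal_integral_norm_eq_lintegral_enorm hint
  have h3 : (∫⁻ t in Ioc a b, (‖g t‖₊ : ℝ≥0∞)) ≤ ∫⁻ t in Ioo 0 T, ‖g t‖₊ := by
    have heq : (∫⁻ t in Ioo 0 T, (‖g t‖₊ : ℝ≥0∞)) = ∫⁻ t in Ioc 0 T, ‖g t‖₊ :=
      setLIntegral_congr Ioo_ae_eq_Ioc
    rw [heq]
    exact lintegral_mono_set (Ioc_subset_Ioc ha hbT)
  have h4 : eLpNorm g 1 μ = ∫⁻ t in Ioo 0 T, ‖g t‖₊ := by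
    rw [hμ]; exact eLpNorm_one_eq_lintegral_enorm
  have h5 : ENNReal.ofReal (∫ t in a..b, ‖g t‖) ≤ R := by
    rw [h2]; exact h3.trans (h4 ▸ h1)
  have h6 : 0 ≤ ∫ t in a..b, ‖g t‖ :=
    intervalIntegral.integral_nonneg hab (fun x _ => norm_nonneg _)
  calc ∫ t in a..b, ‖g t‖ = (ENNReal.ofReal (∫ t in a..b, ‖g t‖)).toReal := by
        rw [ENNReal.toReal_ofReal h6]
    _ ≤ R.toReal := ENNReal.toReal_mono hRfin h5

lemma aux_primitive_cont [CompleteSpace E] {g : ℝ → E} (hg : Continuous g) :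
    Continuous (fun t => ∫ s in (0:ℝ)..t, g s) := by
  apply continuous_iff_continuousAt.2
  intro t
  exact (intervalIntegral.integral_hasDerivAt_right (hg.intervalIntegrable _ _)
    hg.stronglyMeasurable.stronglyMeasurableAtFilter hg.continuousAt).continuousAt

lemma aux_rpow_le {s c q : ℝ} (hs : 0 ≤ s) (hsc : s ≤ c) (hq : 1 ≤ q) :
    s ^ q ≤ c ^ (q - 1) * s := by
  rcases eq_or_lt_of_le hs with h0 | h0
  · rw [← h0, Real.zero_rpow (by linarith : q ≠ 0), mul_zero]
  · have h1 : s ^ q = s ^ (q - 1) * s := by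
      have hq1 : (q - 1) + 1 = q := by ring
      calc s ^ q = s ^ ((q - 1) + 1) := by rw [hq1]
        _ = s ^ (q - 1) * s ^ (1:ℝ) := Real.rpow_add h0 _ _
        _ = s ^ (q - 1) * s := by rw [Real.rpow_one]
    rw [h1]
    exact mul_le_mul_of_nonneg_right (Real.rpow_le_rpow hs hsc (by linarith)) hs

end aux
set_option maxHeartbeats 1000000

section aux
variable {E F G : Type*} [NormedAddCommGroup E] [NormedSpace ℝ E]
  [NormedAddCommGroup F] [NormedSpace ℝ F] [NormedAddCommGroup G] [NormedSpace ℝ G]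

lemma aux_pointwise_bound [CompleteSpace E] {T : ℝ} (hT : 0 < T) {f f' : ℝ → E}
    (hf : ∀ t, HasDerivAt f (f' t) t) (hf' : Continuous f') {B B' : ℝ}
    (hB : ∀ a b : ℝ, 0 ≤ a → a ≤ b → b ≤ T → ∫ t in a..b, ‖f t‖ ≤ B)
    (hB' : ∀ a b : ℝ, 0 ≤ a → a ≤ b → b ≤ T → ∫ t in a..b, ‖f' t‖ ≤ B') :
    ∀ t ∈ Icc (0:ℝ) T, ‖f t‖ ≤ B / T + B' := by
  have hfc : Continuous f := by
    apply continuous_iff_continuousAt.2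
    exact fun t => (hf t).differentiableAt.continuousAt
  intro t ht
  have key : ∀ s ∈ Icc (0:ℝ) T, ‖f t‖ ≤ ‖f s‖ + B' := by
    intro s hs
    have hsub : ∀ x y : ℝ, x ∈ Icc (0:ℝ) T → y ∈ Icc (0:ℝ) T → x ≤ y → ‖f y - f x‖ ≤ B' := by
      intro x y hx hy hxy
      have hfts : ∫ r in x..y, f' r = f y - f x :=
        intervalIntegral.integral_eq_sub_of_hasDerivAt (fun r _ => hf r)
          (hf'.intervalIntegrable x y)
      rw [← hfts]
      calc ‖∫ r in x..y, f' r‖ ≤ ∫ r in x..y, ‖f' r‖ :=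
            intervalIntegral.norm_integral_le_integral_norm hxy
        _ ≤ B' := hB' x y hx.1 hxy hy.2
    rcases le_total s t with hst | hts
    · have := hsub s t hs ht hst
      calc ‖f t‖ ≤ ‖f s‖ + ‖f t - f s‖ := by
            have := norm_add_le (f s) (f t - f s); simpa using this
        _ ≤ ‖f s‖ + B' := by linarith
    · have := hsub t s ht hs hts
      calc ‖f t‖ ≤ ‖f s‖ + ‖f s - f t‖ := by
            rw [norm_sub_rev]
            have := norm_add_le (f s) (f t - f s); simpa using this
        _ ≤ ‖f s‖ + B' := by linarith
  have hTT : T * ‖f t‖ ≤ B + T * B' := by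
    have h1 : (∫ _ in (0:ℝ)..T, ‖f t‖) = T * ‖f t‖ := by
      rw [intervalIntegral.integral_const, smul_eq_mul, sub_zero]
    have h2 : (∫ s in (0:ℝ)..T, (‖f s‖ + B')) = (∫ s in (0:ℝ)..T, ‖f s‖) + T * B' := by
      rw [intervalIntegral.integral_add (hfc.norm.intervalIntegrable _ _)
        intervalIntegrable_const, intervalIntegral.integral_const, smul_eq_mul, sub_zero]
    have h3 : (∫ _ in (0:ℝ)..T, ‖f t‖) ≤ ∫ s in (0:ℝ)..T, (‖f s‖ + B') := by
      apply intervalIntegral.integral_mono_on hT.le intervalIntegrable_const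
        ((hfc.norm.intervalIntegrable _ _).add intervalIntegrable_const)
      exact fun s hs => key s hs
    rw [h1, h2] at h3
    have h4 := hB 0 T le_rfl hT.le le_rfl
    linarith
  have hBT : T * (B / T) = B := mul_div_cancel₀ B hT.ne'
  have : T * ‖f t‖ ≤ T * (B / T + B') := by rw [mul_add, hBT]; linarith
  exact le_of_mul_le_mul_left this hT

lemma aux_ascoli {X : Type*} [PseudoMetricSpace X] [CompactSpace X]
    {K : Set G} (hK : IsCompact K) (Λ : ℝ≥0) :
    IsCompact {g : C(X, G) | LipschitzWith Λ g ∧ ∀ x, g x ∈ K} := by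
  set S : Set C(X, G) := {g : C(X, G) | LipschitzWith Λ g ∧ ∀ x, g x ∈ K} with hS
  apply ArzelaAscoli.isCompact_of_equicontinuous
  · have himg : ContinuousMap.toFun '' S = {f : X → G | LipschitzWith Λ f ∧ ∀ x, f x ∈ K} := by
      ext f
      constructor
      · rintro ⟨g, hg, rfl⟩; exact hg
      · rintro ⟨h1, h2⟩; exact ⟨⟨f, h1.continuous⟩, ⟨h1, h2⟩, rfl⟩
    rw [himg]
    apply IsCompact.of_isClosed_subset (isCompact_univ_pi fun _ : X => hK)
    · have : {f : X → G | LipschitzWith Λ f ∧ ∀ x, f x ∈ K} =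
        {f : X → G | LipschitzWith Λ f} ∩ {f : X → G | ∀ x, f x ∈ K} := rfl
      rw [this]
      apply IsClosed.inter
      · have h2 : {f : X → G | LipschitzWith Λ f} =
            ⋂ (x : X) (y : X), {f : X → G | dist (f x) (f y) ≤ Λ * dist x y} := by
          ext f
          simp only [mem_setOf_eq, mem_iInter, lipschitzWith_iff_dist_le_mul]
        rw [h2]
        exact isClosed_iInter fun x => isClosed_iInter fun y =>
          isClosed_le (Continuous.dist (continuous_apply x) (continuous_apply y)) continuous_const
      · have h3 : {f : X → G | ∀ x, f x ∈ K} = ⋂ (x : X), (fun f : X → G => f x) ⁻¹' K := by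
          ext f; simp [mem_iInter]
        rw [h3]
        exact isClosed_iInter fun x => hK.isClosed.preimage (continuous_apply x)
    · intro f hf
      exact fun x _ => hf.2 x
  · apply Metric.equicontinuous_of_continuity_modulus (fun d => (Λ : ℝ) * d)
    · have : Tendsto (fun d : ℝ => (Λ : ℝ) * d) (𝓝 0) (𝓝 ((Λ : ℝ) * 0)) :=
        (continuous_const.mul continuous_id).tendsto 0
      simpa using this
    · intro x y g
      exact g.2.1.dist_le_mul x y

lemma aux_diag {ι : Type*} [Countable ι] {Y : ι → Type*} [∀ i, MetricSpace (Y i)]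
    {S : ∀ i, Set (Y i)} (hS : ∀ i, IsCompact (S i)) (F : ℕ → ∀ i, Y i)
    (hF : ∀ n i, F n i ∈ S i) :
    ∃ φ : ℕ → ℕ, StrictMono φ ∧ ∀ i, CauchySeq fun n => F (φ n) i := by
  have hc : IsCompact (Set.pi univ S) := isCompact_univ_pi hS
  obtain ⟨c, -, φ, hφ, hconv⟩ := hc.tendsto_subseq (x := F)
    (fun n => Set.mem_univ_pi.2 fun i => hF n i)
  refine ⟨φ, hφ, fun i => ?_⟩
  have : Tendsto (fun n => F (φ n) i) atTop (𝓝 (c i)) :=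
    ((continuous_apply i).continuousAt.tendsto).comp hconv
  exact this.cauchySeq

lemma aux_ball_closure {R : ℝ} (x : Completion E) (hx : ‖x‖ ≤ R)
    (L : Completion E →L[ℝ] G) :
    L x ∈ closure ((fun v : E => L (v : Completion E)) '' Metric.closedBall 0 (R + 1)) := by
  have h1 : x ∈ closure (((↑) : E → Completion E) '' Metric.closedBall 0 (R + 1)) := by
    rw [Metric.mem_closure_iff]
    intro ε hε
    obtain ⟨y, hy⟩ := Completion.denseRange_coe.exists_dist_lt x (lt_min hε one_pos)
    refine ⟨(y : Completion E), ⟨y, ?_, rfl⟩, (hy.trans_le (min_le_left _ _))⟩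
    rw [Metric.mem_closedBall, dist_zero_right, ← Completion.norm_coe (E := E) y]
    have h2 : ‖(y : Completion E)‖ - ‖x‖ ≤ dist x (y : Completion E) := by
      rw [dist_comm, dist_eq_norm]
      have := abs_norm_sub_norm_le ((y : Completion E)) x
      linarith [le_abs_self (‖(y : Completion E)‖ - ‖x‖)]
    have h3 : dist x (y : Completion E) ≤ 1 := (hy.trans_le (min_le_right _ _)).le
    linarith
  have h2 : L x ∈ L '' closure (((↑) : E → Completion E) '' Metric.closedBall 0 (R + 1)) :=
    ⟨x, h1, rfl⟩
  have h3 := image_closure_subset_closure_image (f := ⇑L)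
    (s := ((↑) : E → Completion E) '' Metric.closedBall 0 (R + 1)) L.continuous
  have h4 := h3 h2
  rwa [← image_comp] at h4

end aux

section core
variable {V Hc : Type*} [NormedAddCommGroup V] [NormedSpace ℝ V]
  [NormedAddCommGroup Hc] [NormedSpace ℝ Hc] [CompleteSpace Hc]

lemma core_Lq (ebar : V →L[ℝ] Hc) (hcomp : IsCompactOperator ⇑ebar)
    (E2 : Completion V →L[ℝ] Hc) (hE2 : ∀ v : V, E2 (v : Completion V) = ebar v)
    (T : ℝ) (hT : 0 < T) (q : ℝ≥0∞) (hq1 : 1 ≤ q) (hq : q ≠ ⊤) (k : ℕ)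
    (W : ℕ → ℕ → ℝ → V)
    (hWc : ∀ n i, i ≤ k → Continuous (W n i))
    (f' : ℕ → ℕ → ℝ → Hc)
    (hf'c : ∀ n i, i ≤ k → Continuous (f' n i))
    (hder : ∀ n i, i ≤ k → ∀ t, HasDerivAt (fun s => ebar (W n i s)) (f' n i t) t)
    (B : ℝ) (hB0 : 0 ≤ B)
    (hWB : ∀ n i, i ≤ k → ∀ a b : ℝ, 0 ≤ a → a ≤ b → b ≤ T → ∫ t in a..b, ‖W n i t‖ ≤ B)
    (hf'B : ∀ n i, i ≤ k → ∀ a b : ℝ, 0 ≤ a → a ≤ b → b ≤ T → ∫ t in a..b, ‖f' n i t‖ ≤ B) :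
    ∃ φ : ℕ → ℕ, StrictMono φ ∧
      ∀ ε : ℝ, 0 < ε → ∃ N : ℕ, ∀ a ≥ N, ∀ b ≥ N, ∀ i ≤ k,
        eLpNorm (fun t => ebar (W (φ a) i t) - ebar (W (φ b) i t)) q
          (volume.restrict (Ioo (0 : ℝ) T)) < ENNReal.ofReal ε := by
  set μ : Measure ℝ := volume.restrict (Ioo (0:ℝ) T) with hμdef
  set f : ℕ → ℕ → ℝ → Hc := fun n i t => ebar (W n i t) with hfdef
  have hfc : ∀ n i, i ≤ k → Continuous (f n i) := fun n i hi => ebar.continuous.comp (hWc n i hi)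
  set Bd : ℝ := (‖ebar‖ + 1) * B with hBddef
  have hBd0 : 0 ≤ Bd := by positivity
  have hB_Bd : B ≤ Bd := by nlinarith [norm_nonneg ebar]
  have hfB : ∀ n i, i ≤ k → ∀ a b : ℝ, 0 ≤ a → a ≤ b → b ≤ T →
      ∫ t in a..b, ‖f n i t‖ ≤ Bd := by
    intro n i hi a b ha hab hbT
    calc ∫ t in a..b, ‖f n i t‖ ≤ ∫ t in a..b, ‖ebar‖ * ‖W n i t‖ := by
          apply intervalIntegral.integral_mono_on hab ((hfc n i hi).norm.intervalIntegrable _ _)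
            ((continuous_const.mul (hWc n i hi).norm).intervalIntegrable _ _)
          intro t _; exact ebar.le_opNorm _
      _ = ‖ebar‖ * ∫ t in a..b, ‖W n i t‖ := intervalIntegral.integral_const_mul _ _
      _ ≤ ‖ebar‖ * B := mul_le_mul_of_nonneg_left (hWB n i hi a b ha hab hbT) (norm_nonneg _)
      _ ≤ Bd := by nlinarith [norm_nonneg ebar]
  have hf'Bd : ∀ n i, i ≤ k → ∀ a b : ℝ, 0 ≤ a → a ≤ b → b ≤ T →
      ∫ t in a..b, ‖f' n i t‖ ≤ Bd :=
    fun n i hi a b ha hab hbT => (hf'B n i hi a b ha hab hbT).trans hB_Bd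
  set C : ℝ := Bd / T + Bd with hCdef
  have hC0 : 0 ≤ C := by positivity
  have hfCbound : ∀ n i, i ≤ k → ∀ t ∈ Icc (0:ℝ) T, ‖f n i t‖ ≤ C :=
    fun n i hi => aux_pointwise_bound hT (hder n i hi) (hf'c n i hi) (hfB n i hi) (hf'Bd n i hi)

  -- primitive of ‖f'‖ and its properties
  set G : ℕ → ℕ → ℝ → ℝ := fun n i t => ∫ s in (0:ℝ)..t, ‖f' n i s‖ with hGdef
  have hGc : ∀ n i, i ≤ k → Continuous (G n i) :=
    fun n i hi => aux_primitive_cont (hf'c n i hi).norm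
  have hGsub : ∀ n i, i ≤ k → ∀ s t : ℝ, G n i t - G n i s = ∫ r in s..t, ‖f' n i r‖ := by
    intro n i hi s t
    have h : G n i s + ∫ r in s..t, ‖f' n i r‖ = G n i t :=
      intervalIntegral.integral_add_adjacent_intervals
        ((hf'c n i hi).norm.intervalIntegrable 0 s) ((hf'c n i hi).norm.intervalIntegrable s t)
    linarith
  have hGmono : ∀ n i, i ≤ k → ∀ s t : ℝ, s ≤ t → G n i s ≤ G n i t := by
    intro n i hi s t hst
    have h := hGsub n i hi s t
    have h2 : 0 ≤ ∫ r in s..t, ‖f' n i r‖ :=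
      intervalIntegral.integral_nonneg hst (fun r _ => norm_nonneg _)
    linarith
  have hG0 : ∀ n i, i ≤ k → ∀ t : ℝ, 0 ≤ t → 0 ≤ G n i t := by
    intro n i hi t ht
    have : G n i 0 = 0 := by simp [hGdef]
    have h2 := hGmono n i hi 0 t ht
    linarith
  have hGT : ∀ n i, i ≤ k → G n i T ≤ Bd := by
    intro n i hi
    have h0 : G n i 0 = 0 := by simp [hGdef]
    have h := hGsub n i hi 0 T
    have h2 := hf'Bd n i hi 0 T le_rfl hT.le le_rfl
    linarith
  have hfdiff : ∀ n i, i ≤ k → ∀ s t : ℝ, s ≤ t → ‖f n i t - f n i s‖ ≤ G n i t - G n i s := by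
    intro n i hi s t hst
    rw [hGsub n i hi s t]
    have hfts : ∫ r in s..t, f' n i r = f n i t - f n i s :=
      intervalIntegral.integral_eq_sub_of_hasDerivAt (fun r _ => hder n i hi r)
        ((hf'c n i hi).intervalIntegrable s t)
    rw [← hfts]
    exact intervalIntegral.norm_integral_le_integral_norm hst
  -- the grid
  set hh : ℕ → ℝ := fun m => T / (m + 2) with hhdef
  have hh0 : ∀ m, 0 < hh m := fun m => by positivity
  have hhT : ∀ m, hh m < T := by
    intro m
    rw [hhdef]
    apply div_lt_self hT
    have : (0:ℝ) ≤ (m:ℝ) := Nat.cast_nonneg m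
    linarith
  set LL : ℕ → ℝ := fun m => T - hh m with hLLdef
  have hLL0 : ∀ m, 0 < LL m := fun m => by
    have := hhT m; simp only [hLLdef]; linarith
  have hLLT : ∀ m, LL m < T := fun m => by
    have := hh0 m; simp only [hLLdef]; linarith
  have hLh : ∀ m, LL m + hh m = T := fun m => by simp [hLLdef]

  -- averaged functions
  have hWcV : ∀ n i, i ≤ k → Continuous (fun s => ((W n i s : Completion V))) :=
    fun n i hi => (Completion.continuous_coe V).comp (hWc n i hi)
  set A : ℕ → ℕ → ℕ → ℝ → Completion V := fun n i m t =>
    (hh m)⁻¹ • ∫ s in t..(t + hh m), ((W n i s : Completion V)) with hAdef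
  set av : ℕ → ℕ → ℕ → ℝ → Hc := fun n i m t => E2 (A n i m t) with havdef
  have hav_repr : ∀ n i, i ≤ k → ∀ m t, av n i m t = (hh m)⁻¹ • ∫ s in t..(t + hh m), f n i s := by
    intro n i hi m t
    simp only [havdef, hAdef]
    rw [ContinuousLinearMap.map_smul]
    congr 1
    rw [← ContinuousLinearMap.intervalIntegral_comp_comm E2 ((hWcV n i hi).intervalIntegrable _ _)]
    apply intervalIntegral.integral_congr
    intro s _
    exact hE2 (W n i s)
  have hav_cont : ∀ n i, i ≤ k → ∀ m, Continuous (av n i m) := by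
    intro n i hi m
    have hprim := aux_primitive_cont (hWcV n i hi)
    have hA : Continuous (A n i m) := by
      have hrepr : A n i m = fun t => (hh m)⁻¹ •
          ((∫ s in (0:ℝ)..(t + hh m), (W n i s : Completion V)) -
            ∫ s in (0:ℝ)..t, (W n i s : Completion V)) := by
        funext t
        simp only [hAdef]
        congr 1
        rw [← intervalIntegral.integral_interval_sub_left
          ((hWcV n i hi).intervalIntegrable _ _) ((hWcV n i hi).intervalIntegrable _ _)]
      rw [hrepr]
      exact (continuous_const : Continuous fun _ : ℝ => (hh m)⁻¹).smul ((hprim.comp (continuous_id.add continuous_const)).sub hprim)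
    exact E2.continuous.comp hA
  have hbnd : ∀ n i, i ≤ k → ∀ x y : ℝ, x ∈ Icc (0:ℝ) T → y ∈ Icc (0:ℝ) T →
      ‖∫ s in x..y, f n i s‖ ≤ C * |y - x| := by
    intro n i hi x y hx hy
    apply intervalIntegral.norm_integral_le_of_norm_le_const
    intro s hs
    apply hfCbound n i hi
    rcases Set.mem_uIoc.1 hs with h1 | h1
    · exact ⟨le_trans hx.1 h1.1.le, le_trans h1.2 hy.2⟩
    · exact ⟨le_trans hy.1 h1.1.le, le_trans h1.2 hx.2⟩
  have hav_lip : ∀ n i, i ≤ k → ∀ m, ∀ t ∈ Icc (0:ℝ) (LL m), ∀ t' ∈ Icc (0:ℝ) (LL m),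
      ‖av n i m t - av n i m t'‖ ≤ (2*C/hh m) * |t - t'| := by
    intro n i hi m t ht t' ht'
    have hint : ∀ x y : ℝ, IntervalIntegrable (f n i) volume x y :=
      fun x y => (hfc n i hi).intervalIntegrable x y
    have hchasles : (∫ s in t'..t, f n i s) + (∫ s in t..(t + hh m), f n i s) =
        (∫ s in t'..(t' + hh m), f n i s) + (∫ s in (t' + hh m)..(t + hh m), f n i s) := by
      rw [intervalIntegral.integral_add_adjacent_intervals (hint t' t) (hint t (t + hh m)),
        intervalIntegral.integral_add_adjacent_intervals (hint t' (t' + hh m))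
          (hint (t' + hh m) (t + hh m))]
    have key : (∫ s in t..(t + hh m), f n i s) - (∫ s in t'..(t' + hh m), f n i s) =
        (∫ s in (t' + hh m)..(t + hh m), f n i s) - (∫ s in t'..t, f n i s) := by
      rw [sub_eq_sub_iff_add_eq_add, add_comm, hchasles]
      exact add_comm _ _
    have hmem1 : t ∈ Icc (0:ℝ) T := ⟨ht.1, ht.2.trans (hLLT m).le⟩
    have hmem1' : t' ∈ Icc (0:ℝ) T := ⟨ht'.1, ht'.2.trans (hLLT m).le⟩
    have hmem2 : t + hh m ∈ Icc (0:ℝ) T := by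
      constructor
      · have := hh0 m; linarith [ht.1]
      · have := ht.2; have := hLh m; linarith
    have hmem2' : t' + hh m ∈ Icc (0:ℝ) T := by
      constructor
      · have := hh0 m; linarith [ht'.1]
      · have := ht'.2; have := hLh m; linarith
    calc ‖av n i m t - av n i m t'‖
        = ‖(hh m)⁻¹ • ((∫ s in t..(t + hh m), f n i s) -
            (∫ s in t'..(t' + hh m), f n i s))‖ := by
          rw [hav_repr n i hi m t, hav_repr n i hi m t', smul_sub]
      _ = (hh m)⁻¹ * ‖(∫ s in t..(t + hh m), f n i s) -
            (∫ s in t'..(t' + hh m), f n i s)‖ := by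
          rw [norm_smul, Real.norm_eq_abs, abs_of_pos (by positivity)]
      _ ≤ (hh m)⁻¹ * (C * |t + hh m - (t' + hh m)| + C * |t - t'|) := by
          apply mul_le_mul_of_nonneg_left _ (by positivity)
          rw [key]
          refine (norm_sub_le _ _).trans ?_
          exact add_le_add (hbnd n i hi _ _ hmem2' hmem2) (hbnd n i hi _ _ hmem1' hmem1)
      _ = (2*C/hh m) * |t - t'| := by
          have : |t + hh m - (t' + hh m)| = |t - t'| := by ring_nf
          rw [this]; field_simp; ring

  -- membership in compact sets
  set K : ℕ → Set Hc := fun m =>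
    closure (⇑ebar '' Metric.closedBall 0 ((hh m)⁻¹ * B + 1)) with hKdef
  have hKcomp : ∀ m, IsCompact (K m) :=
    fun m => hcomp.isCompact_closure_image_closedBall _
  have hANorm : ∀ n i, i ≤ k → ∀ m, ∀ t ∈ Icc (0:ℝ) (LL m), ‖A n i m t‖ ≤ (hh m)⁻¹ * B := by
    intro n i hi m t ht
    have hmem2 : t + hh m ≤ T := by have := ht.2; have := hLh m; linarith
    have h1 : ‖∫ s in t..(t + hh m), ((W n i s : Completion V))‖ ≤
        ∫ s in t..(t + hh m), ‖W n i s‖ := by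
      refine (intervalIntegral.norm_integral_le_integral_norm (by linarith [hh0 m])).trans ?_
      apply le_of_eq
      apply intervalIntegral.integral_congr
      intro s _
      exact Completion.norm_coe _
    have h2 : (∫ s in t..(t + hh m), ‖W n i s‖) ≤ B :=
      hWB n i hi t (t + hh m) ht.1 (by linarith [hh0 m]) hmem2
    simp only [hAdef]
    rw [norm_smul, Real.norm_eq_abs, abs_of_pos (by positivity : (0:ℝ) < (hh m)⁻¹)]
    exact mul_le_mul_of_nonneg_left (h1.trans h2) (by positivity)
  have hav_mem : ∀ n i, i ≤ k → ∀ m, ∀ t ∈ Icc (0:ℝ) (LL m), av n i m t ∈ K m := by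
    intro n i hi m t ht
    have h1 := aux_ball_closure (A n i m t) (hANorm n i hi m t ht) E2
    have h2 : (fun v : V => E2 (v : Completion V)) '' Metric.closedBall 0 ((hh m)⁻¹ * B + 1) =
        ⇑ebar '' Metric.closedBall 0 ((hh m)⁻¹ * B + 1) := by
      apply Set.image_congr
      intro v _
      exact hE2 v
    rw [h2] at h1
    exact h1
  -- approximation estimate
  have happrox : ∀ n i, i ≤ k → ∀ m, ∀ t ∈ Icc (0:ℝ) (LL m),
      ‖f n i t - av n i m t‖ ≤ G n i (t + hh m) - G n i t := by
    intro n i hi m t ht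
    have hconst : f n i t = (hh m)⁻¹ • ∫ _ in t..(t + hh m), f n i t := by
      rw [intervalIntegral.integral_const]
      rw [smul_smul]
      rw [add_sub_cancel_left]
      rw [inv_mul_cancel₀ (hh0 m).ne', one_smul]
    have hsub : f n i t - av n i m t =
        (hh m)⁻¹ • ∫ s in t..(t + hh m), (f n i t - f n i s) := by
      rw [hav_repr n i hi m t]
      rw [intervalIntegral.integral_sub intervalIntegrable_const
        ((hfc n i hi).intervalIntegrable _ _), smul_sub, ← hconst]
    rw [hsub, norm_smul, Real.norm_eq_abs, abs_of_pos (by positivity : (0:ℝ) < (hh m)⁻¹)]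
    have hbound : ‖∫ s in t..(t + hh m), (f n i t - f n i s)‖ ≤
        (G n i (t + hh m) - G n i t) * |t + hh m - t| := by
      apply intervalIntegral.norm_integral_le_of_norm_le_const
      intro s hs
      rw [Set.uIoc_of_le (by linarith [hh0 m] : t ≤ t + hh m)] at hs
      rw [norm_sub_rev]
      refine (hfdiff n i hi t s hs.1.le).trans ?_
      have := hGmono n i hi s (t + hh m) hs.2
      linarith
    have habs : |t + hh m - t| = hh m := by
      rw [add_sub_cancel_left]
      exact abs_of_pos (hh0 m)
    rw [habs] at hbound
    calc (hh m)⁻¹ * ‖∫ s in t..(t + hh m), (f n i t - f n i s)‖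
        ≤ (hh m)⁻¹ * ((G n i (t + hh m) - G n i t) * hh m) :=
          mul_le_mul_of_nonneg_left hbound (by positivity)
      _ = G n i (t + hh m) - G n i t := by
          rw [mul_comm (G n i _ - _), ← mul_assoc, inv_mul_cancel₀ (hh0 m).ne', one_mul]
  -- integral of the approximation bound
  have hDint : ∀ n i, i ≤ k → ∀ m,
      ∫ t in (0:ℝ)..(LL m), (G n i (t + hh m) - G n i t) ≤ hh m * Bd := by
    intro n i hi m
    have hGint : ∀ x y : ℝ, IntervalIntegrable (G n i) volume x y :=
      fun x y => (hGc n i hi).intervalIntegrable x y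
    have hGint2 : ∀ x y : ℝ, IntervalIntegrable (fun t => G n i (t + hh m)) volume x y :=
      fun x y => ((hGc n i hi).comp (continuous_id.add continuous_const)).intervalIntegrable x y
    have hshift : (∫ t in (0:ℝ)..(LL m), G n i (t + hh m)) = ∫ t in (hh m)..T, G n i t := by
      have := intervalIntegral.integral_comp_add_right (a := (0:ℝ)) (b := LL m)
        (fun t => G n i t) (hh m)
      rw [this, zero_add, hLh m]
    have hsplit1 : (∫ t in (0:ℝ)..(hh m), G n i t) + (∫ t in (hh m)..T, G n i t) =
        ∫ t in (0:ℝ)..T, G n i t :=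
      intervalIntegral.integral_add_adjacent_intervals (hGint _ _) (hGint _ _)
    have hsplit2 : (∫ t in (0:ℝ)..(LL m), G n i t) + (∫ t in (LL m)..T, G n i t) =
        ∫ t in (0:ℝ)..T, G n i t :=
      intervalIntegral.integral_add_adjacent_intervals (hGint _ _) (hGint _ _)
    have htail : (∫ t in (LL m)..T, G n i t) ≤ hh m * Bd := by
      have h1 : (∫ t in (LL m)..T, G n i t) ≤ ∫ _ in (LL m)..T, Bd := by
        apply intervalIntegral.integral_mono_on (by linarith [hLLT m]) (hGint _ _)
          intervalIntegrable_const
        intro s hs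
        exact (hGmono n i hi s T hs.2).trans (hGT n i hi)
      rw [intervalIntegral.integral_const, smul_eq_mul] at h1
      have : T - LL m = hh m := by have := hLh m; linarith
      rw [this] at h1
      exact h1
    have hhead : 0 ≤ ∫ t in (0:ℝ)..(hh m), G n i t :=
      intervalIntegral.integral_nonneg (hh0 m).le (fun s hs => hG0 n i hi s hs.1)
    have heq : ∫ t in (0:ℝ)..(LL m), (G n i (t + hh m) - G n i t) =
        (∫ t in (0:ℝ)..(LL m), G n i (t + hh m)) - ∫ t in (0:ℝ)..(LL m), G n i t :=
      intervalIntegral.integral_sub (hGint2 _ _) (hGint _ _)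
    rw [heq, hshift]
    linarith

  -- compactness and subsequence extraction
  haveI hcs : ∀ m : ℕ, CompactSpace (Icc (0:ℝ) (LL m)) := fun m => isCompact_iff_compactSpace.1 isCompact_Icc
  set Lam : ℕ → ℝ≥0 := fun m => Real.toNNReal (2*C/hh m) with hLamdef
  set SS : ∀ m : ℕ, Set (Fin (k+1) → C(Icc (0:ℝ) (LL m), Hc)) := fun m =>
    Set.pi univ (fun _ => {g : C(Icc (0:ℝ) (LL m), Hc) |
      LipschitzWith (Lam m) g ∧ ∀ x, g x ∈ K m}) with hSSdef
  have hSS : ∀ m, IsCompact (SS m) :=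
    fun m => isCompact_univ_pi (fun _ => aux_ascoli (hKcomp m) (Lam m))
  set FF : ℕ → ∀ m : ℕ, (Fin (k+1) → C(Icc (0:ℝ) (LL m), Hc)) := fun n m i =>
    ⟨fun x => av n (i : ℕ) m (x : ℝ),
      (hav_cont n (i : ℕ) (Nat.lt_succ_iff.1 i.isLt) m).comp continuous_subtype_val⟩
    with hFFdef
  have hFFmem : ∀ n m, FF n m ∈ SS m := by
    intro n m
    rw [hSSdef]
    rw [Set.mem_univ_pi]
    intro i
    have hik : (i : ℕ) ≤ k := Nat.lt_succ_iff.1 i.isLt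
    constructor
    · apply LipschitzWith.of_dist_le_mul
      intro x y
      simp only [hFFdef, ContinuousMap.coe_mk, dist_eq_norm]
      have h1 := hav_lip n (i : ℕ) hik m (x : ℝ) x.2 (y : ℝ) y.2
      have h2 : ((Lam m : ℝ≥0) : ℝ) = 2*C/hh m := by
        rw [hLamdef]
        exact Real.coe_toNNReal _ (by positivity)
      rw [h2]
      refine h1.trans (le_of_eq ?_)
      rw [Subtype.dist_eq, Real.dist_eq]
    · intro x
      exact hav_mem n (i : ℕ) hik m (x : ℝ) x.2
  obtain ⟨φ, hφ, hcauchy⟩ := aux_diag hSS FF hFFmem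
  refine ⟨φ, hφ, ?_⟩

  -- final epsilon argument
  intro ε hε
  have hq0' : q ≠ 0 := (zero_lt_one.trans_le hq1).ne'
  set qb : ℝ := q.toReal with hqbdef
  have hqb1 : 1 ≤ qb := by
    rw [hqbdef, ← ENNReal.toReal_one]
    exact ENNReal.toReal_mono hq hq1
  have hqb0 : 0 < qb := by linarith
  set P : ℝ := (2*C) ^ (qb - 1) with hPdef
  have hP0 : 0 ≤ P := Real.rpow_nonneg (by linarith) _
  set ε' : ℝ := ε ^ qb with hε'def
  have hε'0 : 0 < ε' := Real.rpow_pos_of_pos hε _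
  set c1 : ℝ := P * (2*Bd + 2*C) with hc1def
  have hc10 : 0 ≤ c1 := by
    apply mul_nonneg hP0; linarith
  obtain ⟨m0, hm0⟩ := exists_nat_gt (T * (2*(c1+1)) / ε')
  have hden : (0:ℝ) < (m0:ℝ) + 2 := by positivity
  have hm1 : T * (2*(c1+1)) < (m0:ℝ) * ε' := (div_lt_iff₀ hε'0).1 hm0
  have hhm : hh m0 * (c1 + 1) < ε'/2 := by
    have heq : hh m0 * (c1+1) = T * (c1+1) / ((m0:ℝ)+2) := by
      simp only [hhdef]; field_simp
    rw [heq, div_lt_div_iff₀ hden (by norm_num : (0:ℝ) < 2)]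
    nlinarith [hε'0]
  set δ₂ : ℝ := ε'/(2*(P*T + 1)) with hδ₂def
  have hPT0 : 0 ≤ P*T := mul_nonneg hP0 hT.le
  have hδ₂0 : 0 < δ₂ := by
    apply div_pos hε'0; nlinarith
  obtain ⟨N, hN⟩ := Metric.cauchySeq_iff.1 (hcauchy m0) δ₂ hδ₂0
  refine ⟨N, ?_⟩
  intro a ha b hb i hik
  set na := φ a with hnadef
  set nb := φ b with hnbdef
  have hdistav : ∀ t ∈ Icc (0:ℝ) (LL m0), ‖av na i m0 t - av nb i m0 t‖ ≤ δ₂ := by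
    intro t ht
    have hik' : i < k + 1 := Nat.lt_succ_of_le hik
    have h1 : dist (FF na m0 ⟨i, hik'⟩ ⟨t, ht⟩) (FF nb m0 ⟨i, hik'⟩ ⟨t, ht⟩) ≤
        dist (FF na m0 ⟨i, hik'⟩) (FF nb m0 ⟨i, hik'⟩) :=
      ContinuousMap.dist_apply_le_dist _
    have h2 : dist (FF na m0 ⟨i, hik'⟩) (FF nb m0 ⟨i, hik'⟩) ≤ dist (FF na m0) (FF nb m0) :=
      dist_le_pi_dist _ _ _
    have h3 := hN a ha b hb
    have h4 : dist (FF na m0 ⟨i, hik'⟩ ⟨t, ht⟩) (FF nb m0 ⟨i, hik'⟩ ⟨t, ht⟩) =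
        ‖av na i m0 t - av nb i m0 t‖ := by
      simp only [hFFdef, ContinuousMap.coe_mk, dist_eq_norm]
    rw [h4] at h1
    linarith
  show eLpNorm (fun t => f na i t - f nb i t) q μ < ENNReal.ofReal ε
  rw [eLpNorm_eq_lintegral_rpow_enorm_toReal hq0' hq]
  have hik' : i ≤ k := hik
  -- pointwise bounds
  have hd2C : ∀ t ∈ Icc (0:ℝ) T, ‖f na i t - f nb i t‖ ≤ 2*C := by
    intro t ht
    have := hfCbound na i hik' t ht
    have := hfCbound nb i hik' t ht
    calc ‖f na i t - f nb i t‖ ≤ ‖f na i t‖ + ‖f nb i t‖ := norm_sub_le _ _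
      _ ≤ 2*C := by linarith
  set D : ℕ → ℝ → ℝ := fun n t => G n i (t + hh m0) - G n i t with hDdef
  have hDc : ∀ n, Continuous (D n) :=
    fun n => ((hGc n i hik').comp (continuous_id.add continuous_const)).sub (hGc n i hik')
  have hD0 : ∀ n t, 0 ≤ D n t := by
    intro n t
    have := hGmono n i hik' t (t + hh m0) (by linarith [hh0 m0])
    simp only [hDdef]; linarith
  set SB : ℝ → ℝ := fun t => P * (D na t + δ₂ + D nb t) with hSBdef
  have hSBc : Continuous SB := continuous_const.mul (((hDc na).add continuous_const).add (hDc nb))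
  have hSB0 : ∀ t, 0 ≤ SB t := by
    intro t
    apply mul_nonneg hP0
    have := hD0 na t; have := hD0 nb t; linarith
  -- split the lintegral
  have hdisj : Disjoint (Ioo (0:ℝ) (LL m0)) (Ico (LL m0) T) := by
    rw [Set.disjoint_left]
    intro x hx1 hx2
    exact absurd hx1.2 (not_lt.2 hx2.1)
  have hsplitset : Ioo (0:ℝ) T = Ioo 0 (LL m0) ∪ Ico (LL m0) T :=
    (Set.Ioo_union_Ico_eq_Ioo (hLL0 m0) (hLLT m0).le).symm
  have hsplit : ∫⁻ t, (‖f na i t - f nb i t‖₊ : ℝ≥0∞) ^ qb ∂μ =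
      (∫⁻ t in Ioo (0:ℝ) (LL m0), (‖f na i t - f nb i t‖₊ : ℝ≥0∞) ^ qb) +
      ∫⁻ t in Ico (LL m0) T, (‖f na i t - f nb i t‖₊ : ℝ≥0∞) ^ qb := by
    rw [hμdef, hsplitset]
    exact lintegral_union measurableSet_Ico hdisj
  -- part 1
  have hpart1 : (∫⁻ t in Ioo (0:ℝ) (LL m0), (‖f na i t - f nb i t‖₊ : ℝ≥0∞) ^ qb) ≤
      ENNReal.ofReal (P * (2 * hh m0 * Bd + δ₂ * T)) := by
    have hptwise : ∀ t ∈ Ioo (0:ℝ) (LL m0),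
        (‖f na i t - f nb i t‖₊ : ℝ≥0∞) ^ qb ≤ ENNReal.ofReal (SB t) := by
      intro t ht
      have htIcc : t ∈ Icc (0:ℝ) (LL m0) := Ioo_subset_Icc_self ht
      have htT : t ∈ Icc (0:ℝ) T := ⟨htIcc.1, htIcc.2.trans (hLLT m0).le⟩
      have hS : ‖f na i t - f nb i t‖ ≤ D na t + δ₂ + D nb t := by
        calc ‖f na i t - f nb i t‖ ≤
            ‖f na i t - av na i m0 t‖ + ‖av na i m0 t - av nb i m0 t‖ +
              ‖av nb i m0 t - f nb i t‖ := by
              have := norm_sub_le_norm_sub_add_norm_sub (f na i t) (av nb i m0 t) (f nb i t)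
              have := norm_sub_le_norm_sub_add_norm_sub (f na i t) (av na i m0 t) (av nb i m0 t)
              linarith
          _ ≤ D na t + δ₂ + D nb t := by
              have ha1 := happrox na i hik' m0 t htIcc
              have ha2 := hdistav t htIcc
              have ha3 := happrox nb i hik' m0 t htIcc
              rw [norm_sub_rev (av nb i m0 t)]
              simp only [hDdef]
              linarith
      rw [show (‖f na i t - f nb i t‖₊ : ℝ≥0∞) = ENNReal.ofReal ‖f na i t - f nb i t‖ from
          (ofReal_norm _).symm,
        ENNReal.ofReal_rpow_of_nonneg (norm_nonneg _) hqb0.le]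
      apply ENNReal.ofReal_le_ofReal
      calc ‖f na i t - f nb i t‖ ^ qb ≤ (2*C) ^ (qb-1) * ‖f na i t - f nb i t‖ :=
            aux_rpow_le (norm_nonneg _) (hd2C t htT) hqb1
        _ ≤ SB t := by
            simp only [hSBdef, hPdef]
            exact mul_le_mul_of_nonneg_left hS (Real.rpow_nonneg (by linarith) _)
    calc (∫⁻ t in Ioo (0:ℝ) (LL m0), (‖f na i t - f nb i t‖₊ : ℝ≥0∞) ^ qb)
        ≤ ∫⁻ t in Ioo (0:ℝ) (LL m0), ENNReal.ofReal (SB t) := by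
          apply setLIntegral_mono (hSBc.measurable.ennreal_ofReal) hptwise
      _ = ENNReal.ofReal (∫ t in Ioo (0:ℝ) (LL m0), SB t) := by
          rw [← ofReal_integral_eq_lintegral_ofReal
            ((hSBc.integrableOn_Icc).mono_set Ioo_subset_Icc_self)
            (Eventually.of_forall hSB0)]
      _ ≤ ENNReal.ofReal (P * (2 * hh m0 * Bd + δ₂ * T)) := by
          apply ENNReal.ofReal_le_ofReal
          have hIoo : ∫ t in Ioo (0:ℝ) (LL m0), SB t = ∫ t in (0:ℝ)..(LL m0), SB t := by
            rw [intervalIntegral.integral_of_le (hLL0 m0).le, integral_Ioc_eq_integral_Ioo]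
          rw [hIoo]
          have hi1 : IntervalIntegrable (D na) volume 0 (LL m0) :=
            (hDc na).intervalIntegrable _ _
          have hi2 : IntervalIntegrable (D nb) volume 0 (LL m0) :=
            (hDc nb).intervalIntegrable _ _
          have hint : ∫ t in (0:ℝ)..(LL m0), SB t =
              P * ((∫ t in (0:ℝ)..(LL m0), D na t) + δ₂ * LL m0 +
                (∫ t in (0:ℝ)..(LL m0), D nb t)) := by
            simp only [hSBdef]
            rw [intervalIntegral.integral_const_mul]
            congr 1
            rw [intervalIntegral.integral_add (hi1.add intervalIntegrable_const) hi2,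
              intervalIntegral.integral_add hi1 intervalIntegrable_const,
              intervalIntegral.integral_const, smul_eq_mul, sub_zero, mul_comm]
          rw [hint]
          apply mul_le_mul_of_nonneg_left _ hP0
          have hd1 := hDint na i hik' m0
          have hd2 := hDint nb i hik' m0
          simp only [hDdef] at hd1 hd2 ⊢
          have hLT' : δ₂ * LL m0 ≤ δ₂ * T :=
            mul_le_mul_of_nonneg_left (hLLT m0).le hδ₂0.le
          linarith
  -- part 2
  have hpart2 : (∫⁻ t in Ico (LL m0) T, (‖f na i t - f nb i t‖₊ : ℝ≥0∞) ^ qb) ≤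
      ENNReal.ofReal (P * (2 * C * hh m0)) := by
    have hptwise : ∀ t ∈ Ico (LL m0) T,
        (‖f na i t - f nb i t‖₊ : ℝ≥0∞) ^ qb ≤ ENNReal.ofReal (P * (2*C)) := by
      intro t ht
      have htT : t ∈ Icc (0:ℝ) T := ⟨(hLL0 m0).le.trans ht.1, ht.2.le⟩
      rw [show (‖f na i t - f nb i t‖₊ : ℝ≥0∞) = ENNReal.ofReal ‖f na i t - f nb i t‖ from
          (ofReal_norm _).symm,
        ENNReal.ofReal_rpow_of_nonneg (norm_nonneg _) hqb0.le]
      apply ENNReal.ofReal_le_ofReal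
      calc ‖f na i t - f nb i t‖ ^ qb ≤ (2*C) ^ (qb-1) * ‖f na i t - f nb i t‖ :=
            aux_rpow_le (norm_nonneg _) (hd2C t htT) hqb1
        _ ≤ P * (2*C) := by
            rw [hPdef]
            exact mul_le_mul_of_nonneg_left (hd2C t htT) (Real.rpow_nonneg (by linarith) _)
    calc (∫⁻ t in Ico (LL m0) T, (‖f na i t - f nb i t‖₊ : ℝ≥0∞) ^ qb)
        ≤ ∫⁻ _ in Ico (LL m0) T, ENNReal.ofReal (P * (2*C)) :=
          setLIntegral_mono measurable_const hptwise
      _ = ENNReal.ofReal (P * (2*C)) * volume (Ico (LL m0) T) := setLIntegral_const _ _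
      _ = ENNReal.ofReal (P * (2*C)) * ENNReal.ofReal (hh m0) := by
          rw [Real.volume_Ico]
          congr 1
          have := hLh m0; congr 1; linarith
      _ = ENNReal.ofReal (P * (2 * C * hh m0)) := by
          rw [← ENNReal.ofReal_mul (by positivity : (0:ℝ) ≤ P * (2*C))]
          congr 1
          ring
  -- combine
  have htotal : (∫⁻ t, (‖f na i t - f nb i t‖₊ : ℝ≥0∞) ^ qb ∂μ) <
      ENNReal.ofReal ε' := by
    rw [hsplit]
    have hsum := add_le_add hpart1 hpart2
    rw [← ENNReal.ofReal_add (by positivity) (by positivity)] at hsum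
    refine hsum.trans_lt ?_
    rw [ENNReal.ofReal_lt_ofReal_iff hε'0]
    have hX : P * (2 * hh m0 * Bd + δ₂ * T) + P * (2 * C * hh m0) =
        hh m0 * c1 + δ₂ * (P * T) := by
      simp only [hc1def]; ring
    rw [hX]
    have h1 : hh m0 * c1 < ε'/2 := by
      have := hh0 m0
      nlinarith
    have h2 : δ₂ * (P * T) < ε'/2 := by
      have heq : δ₂ * (2*(P*T + 1)) = ε' := by
        rw [hδ₂def]
        field_simp
      nlinarith
    linarith
  calc (∫⁻ t, (‖f na i t - f nb i t‖₊ : ℝ≥0∞) ^ qb ∂μ) ^ (1/qb)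
      < (ENNReal.ofReal ε') ^ (1/qb) := by
        apply ENNReal.rpow_lt_rpow htotal (by positivity)
    _ = ENNReal.ofReal ε := by
        rw [hε'def, ← ENNReal.ofReal_rpow_of_pos hε, ← ENNReal.rpow_mul,
          mul_one_div_cancel hqb0.ne', ENNReal.rpow_one]
end core

section coresup
variable {V Hc : Type*} [NormedAddCommGroup V] [NormedSpace ℝ V]
  [NormedAddCommGroup Hc] [NormedSpace ℝ Hc]

lemma core_sup (ebar : V →L[ℝ] Hc) (hcomp : IsCompactOperator ⇑ebar)
    (T : ℝ) (hT : 0 < T) (k : ℕ)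
    (W : ℕ → ℕ → ℝ → V) (hWc : ∀ n i, i ≤ k → Continuous (W n i))
    (f' : ℕ → ℕ → ℝ → Hc)
    (hder : ∀ n i, i ≤ k → ∀ t, HasDerivAt (fun s => ebar (W n i s)) (f' n i t) t)
    (Cb : ℝ)
    (hWb : ∀ n i, i ≤ k → ∀ t ∈ Icc (0:ℝ) T, ‖W n i t‖ ≤ Cb)
    (hf'b : ∀ n i, i ≤ k → ∀ t ∈ Icc (0:ℝ) T, ‖f' n i t‖ ≤ Cb) :
    ∃ φ : ℕ → ℕ, StrictMono φ ∧
      ∀ ε : ℝ, 0 < ε → ∃ N : ℕ, ∀ a ≥ N, ∀ b ≥ N, ∀ i ≤ k, ∀ t ∈ Icc (0:ℝ) T,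
        ‖ebar (W (φ a) i t) - ebar (W (φ b) i t)‖ < ε := by
  have hCb0 : 0 ≤ Cb :=
    (norm_nonneg _).trans (hWb 0 0 (Nat.zero_le k) 0 ⟨le_rfl, hT.le⟩)
  set K : Set Hc := closure (⇑ebar '' Metric.closedBall 0 Cb) with hKdef
  have hKcomp : IsCompact K := hcomp.isCompact_closure_image_closedBall _
  have hlip : ∀ n i, i ≤ k → ∀ x ∈ Icc (0:ℝ) T, ∀ y ∈ Icc (0:ℝ) T,
      ‖ebar (W n i y) - ebar (W n i x)‖ ≤ Cb * ‖y - x‖ := by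
    intro n i hi x hx y hy
    exact (convex_Icc (0:ℝ) T).norm_image_sub_le_of_norm_hasDerivWithin_le
      (fun z hz => (hder n i hi z).hasDerivWithinAt)
      (fun z hz => hf'b n i hi z hz) hx hy
  haveI : CompactSpace (Icc (0:ℝ) T) := isCompact_iff_compactSpace.1 isCompact_Icc
  set Lam : ℝ≥0 := Real.toNNReal Cb with hLamdef
  set FF : ℕ → ∀ _ : Fin (k+1), C(Icc (0:ℝ) T, Hc) := fun n i =>
    ⟨fun x => ebar (W n (i : ℕ) x),
      (ebar.continuous.comp (hWc n (i : ℕ) (Nat.lt_succ_iff.1 i.isLt))).comp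
        continuous_subtype_val⟩ with hFFdef
  have hFFmem : ∀ n (i : Fin (k+1)),
      FF n i ∈ {g : C(Icc (0:ℝ) T, Hc) | LipschitzWith Lam g ∧ ∀ x, g x ∈ K} := by
    intro n i
    have hik : (i : ℕ) ≤ k := Nat.lt_succ_iff.1 i.isLt
    constructor
    · apply LipschitzWith.of_dist_le_mul
      intro x y
      simp only [hFFdef, ContinuousMap.coe_mk, dist_eq_norm]
      have h1 := hlip n (i : ℕ) hik (y : ℝ) y.2 (x : ℝ) x.2
      have h2 : ((Lam : ℝ≥0) : ℝ) = Cb := Real.coe_toNNReal _ hCb0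
      rw [h2, Subtype.dist_eq, Real.dist_eq]
      refine h1.trans (le_of_eq ?_)
      rw [Real.norm_eq_abs]
    · intro x
      apply subset_closure
      exact ⟨W n (i : ℕ) (x : ℝ), Metric.mem_closedBall.2 (by
        rw [dist_zero_right]
        exact hWb n (i : ℕ) hik (x : ℝ) x.2), rfl⟩
  obtain ⟨φ, hφ, hcauchy⟩ := aux_diag (Y := fun _ : Fin (k+1) => C(Icc (0:ℝ) T, Hc))
    (fun i => aux_ascoli hKcomp Lam) FF (fun n i => hFFmem n i)
  refine ⟨φ, hφ, ?_⟩
  intro ε hε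
  choose N hN using fun i : Fin (k+1) => Metric.cauchySeq_iff.1 (hcauchy i) ε hε
  refine ⟨Finset.univ.sup N, ?_⟩
  intro a ha b hb i hik t ht
  have hik' : i < k + 1 := Nat.lt_succ_of_le hik
  have hNle : N ⟨i, hik'⟩ ≤ Finset.univ.sup N := Finset.le_sup (Finset.mem_univ _)
  have h3 := hN ⟨i, hik'⟩ a (le_trans hNle ha) b (le_trans hNle hb)
  have h1 : dist (FF (φ a) ⟨i, hik'⟩ ⟨t, ht⟩) (FF (φ b) ⟨i, hik'⟩ ⟨t, ht⟩) ≤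
      dist (FF (φ a) ⟨i, hik'⟩) (FF (φ b) ⟨i, hik'⟩) :=
    ContinuousMap.dist_apply_le_dist _
  have h4 : dist (FF (φ a) ⟨i, hik'⟩ ⟨t, ht⟩) (FF (φ b) ⟨i, hik'⟩ ⟨t, ht⟩) =
      ‖ebar (W (φ a) i t) - ebar (W (φ b) i t)‖ := by
    simp only [hFFdef, ContinuousMap.coe_mk, dist_eq_norm]
  rw [h4] at h1
  exact h1.trans_lt h3
end coresup


/-- Aubin–Lions type compactness: Let `V` be compactly embedded in `H` via `e`,
`I = (0,T)`, `k ≥ 0`, `1 ≤ q ≤ p ≤ ∞` with `q < ∞`. Any sequence bounded in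
`W^{k,p}(I;V) ∩ W^{k+1,p}(I;H)` has a subsequence that is Cauchy in `W^{k,q}(I;H)`; if moreover
`p = ∞`, it has a subsequence that is Cauchy in `C^k([0,T];H)`. -/
theorem stmt16 {V H : Type*} [NormedAddCommGroup V] [NormedSpace ℝ V]
    [NormedAddCommGroup H] [NormedSpace ℝ H]
    (e : V →L[ℝ] H) (hinj : Function.Injective e) (hcomp : IsCompactOperator e)
    (T : ℝ) (hT : 0 < T) (k : ℕ)
    (p q : ℝ≥0∞) (hp : 1 ≤ p) (hq1 : 1 ≤ q) (hqp : q ≤ p) (hq : q ≠ ⊤)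
    (u : ℕ → ℝ → V)
    (husm : ∀ n, ContDiff ℝ (k : ℕ∞) (u n))
    (husm' : ∀ n, ContDiff ℝ ((k : ℕ∞) + 1) (fun t => e (u n t)))
    (M : ℝ≥0∞) (hM : M ≠ ⊤)
    (hbV : ∀ n, ∀ i ≤ k,
      eLpNorm (iteratedDeriv i (u n)) p (volume.restrict (Ioo (0 : ℝ) T)) ≤ M)
    (hbH : ∀ n,
      eLpNorm (iteratedDeriv (k + 1) (fun t => e (u n t))) p (volume.restrict (Ioo (0 : ℝ) T))
        ≤ M) :
    (∃ φ : ℕ → ℕ, StrictMono φ ∧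
      ∀ ε : ℝ, 0 < ε → ∃ N : ℕ, ∀ a ≥ N, ∀ b ≥ N, ∀ i ≤ k,
        eLpNorm
            (fun t => iteratedDeriv i (fun s => e (u (φ a) s)) t -
              iteratedDeriv i (fun s => e (u (φ b) s)) t)
            q (volume.restrict (Ioo (0 : ℝ) T)) < ENNReal.ofReal ε) ∧
    (p = ⊤ → ∃ φ : ℕ → ℕ, StrictMono φ ∧
      ∀ ε : ℝ, 0 < ε → ∃ N : ℕ, ∀ a ≥ N, ∀ b ≥ N, ∀ i ≤ k, ∀ t ∈ Icc (0 : ℝ) T,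
        ‖iteratedDeriv i (fun s => e (u (φ a) s)) t -
            iteratedDeriv i (fun s => e (u (φ b) s)) t‖ < ε) := by
  -- completions
  let jH : H →L[ℝ] Completion H := Completion.toComplL
  let jV : V →L[ℝ] Completion V := Completion.toComplL
  let ebar : V →L[ℝ] Completion H := jH.comp e
  have hjH : ∀ x : H, jH x = (x : Completion H) := fun x =>
    congrFun (Completion.coe_toComplL (𝕜 := ℝ) (E := H)) x
  have hjHnorm : ∀ x : H, ‖jH x‖ = ‖x‖ := by
    intro x; rw [hjH]; exact Completion.norm_coe x
  have hebar : ∀ x : V, ebar x = jH (e x) := fun x => rfl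
  have hcomp' : IsCompactOperator ⇑ebar := hcomp.clm_comp (σ₂₃ := RingHom.id ℝ) jH
  have hjVcoe : ⇑jV = ((↑) : V → Completion V) := Completion.coe_toComplL
  have hjVui : IsUniformInducing ⇑jV := by
    rw [hjVcoe]; exact Completion.isUniformInducing_coe V
  have hjVdr : DenseRange ⇑jV := by
    rw [hjVcoe]; exact Completion.denseRange_coe
  let E2 : Completion V →L[ℝ] Completion H := ContinuousLinearMap.extend ebar jV
  have hE2 : ∀ v : V, E2 (v : Completion V) = ebar v := by
    intro v
    have h := ContinuousLinearMap.extend_eq (f := ebar) (e := jV) hjVdr hjVui v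
    rwa [show jV v = (v : Completion V) from congrFun hjVcoe v] at h
  -- the derivatives
  let W : ℕ → ℕ → ℝ → V := fun n i => iteratedDeriv i (u n)
  have hWc : ∀ n i, i ≤ k → Continuous (W n i) := fun n i hi =>
    (husm n).continuous_iteratedDeriv i (by exact_mod_cast hi)
  have hcommH : ∀ n i, i ≤ k →
      iteratedDeriv i (fun t => e (u n t)) = fun t => e (W n i t) := fun n i hi =>
    aux_clm_iteratedDeriv e (husm n) (by exact_mod_cast hi)
  have hg : ∀ n, ContDiff ℝ ((k : ℕ∞) + 1) (fun t => jH (e (u n t))) := fun n =>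
    (jH.contDiff.comp (husm' n) : _)
  have hcommH' : ∀ n i, i ≤ k + 1 →
      iteratedDeriv i (fun t => jH (e (u n t))) =
        fun t => jH (iteratedDeriv i (fun s => e (u n s)) t) := fun n i hi =>
    aux_clm_iteratedDeriv jH (husm' n) (by exact_mod_cast hi)
  have hcommH'' : ∀ n i, i ≤ k →
      iteratedDeriv i (fun t => jH (e (u n t))) = fun t => jH (e (W n i t)) := by
    intro n i hi
    rw [hcommH' n i (hi.trans (Nat.le_succ k)), hcommH n i hi]
  let f' : ℕ → ℕ → ℝ → Completion H := fun n i =>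
    iteratedDeriv (i+1) (fun t => jH (e (u n t)))
  have hf'c : ∀ n i, i ≤ k → Continuous (f' n i) := fun n i hi =>
    (hg n).continuous_iteratedDeriv (i+1) (by exact_mod_cast Nat.succ_le_succ hi)
  have hder : ∀ n i, i ≤ k → ∀ t, HasDerivAt (fun s => ebar (W n i s)) (f' n i t) t := by
    intro n i hi t
    have h1 : Differentiable ℝ (iteratedDeriv i (fun t => jH (e (u n t)))) :=
      (hg n).differentiable_iteratedDeriv i (by exact_mod_cast Nat.lt_succ_of_le hi)
    have h2 := (h1 t).hasDerivAt
    have h3 : deriv (iteratedDeriv i (fun t => jH (e (u n t)))) t = f' n i t := by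
      rw [show f' n i = iteratedDeriv (i+1) (fun t => jH (e (u n t))) from rfl,
        iteratedDeriv_succ]
    rw [h3] at h2
    have h4 : (fun s => ebar (W n i s)) = iteratedDeriv i (fun t => jH (e (u n t))) := by
      rw [hcommH'' n i hi]
      exact funext fun s => hebar _
    rw [h4]
    exact h2
  -- L1 bounds
  set B0 : ℝ := (M * (ENNReal.ofReal T) ^ (1 - p.toReal⁻¹)).toReal with hB0def
  have hB00 : 0 ≤ B0 := ENNReal.toReal_nonneg
  set B : ℝ := (‖e‖ + 1) * (B0 + 1) with hBdef
  have hB0 : 0 ≤ B := by positivity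
  have hB0B : B0 ≤ B := by nlinarith [norm_nonneg e]
  have hWB : ∀ n i, i ≤ k → ∀ a b : ℝ, 0 ≤ a → a ≤ b → b ≤ T →
      ∫ t in a..b, ‖W n i t‖ ≤ B := by
    intro n i hi a b ha hab hbT
    exact (aux_L1_bound hT hp hM (hWc n i hi) (hbV n i hi) a b ha hab hbT).trans hB0B
  have hf'B : ∀ n i, i ≤ k → ∀ a b : ℝ, 0 ≤ a → a ≤ b → b ≤ T →
      ∫ t in a..b, ‖f' n i t‖ ≤ B := by
    intro n i hi a b ha hab hbT
    rcases lt_or_eq_of_le hi with hik | hik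
    · have heq : f' n i = fun t => jH (e (W n (i+1) t)) := hcommH'' n (i+1) hik
      have h1 : ∫ t in a..b, ‖f' n i t‖ = ∫ t in a..b, ‖e (W n (i+1) t)‖ := by
        apply intervalIntegral.integral_congr
        intro s _
        simp only [heq, hjHnorm]
      rw [h1]
      have hWc' := hWc n (i+1) hik
      calc ∫ t in a..b, ‖e (W n (i+1) t)‖ ≤ ∫ t in a..b, ‖e‖ * ‖W n (i+1) t‖ := by
            apply intervalIntegral.integral_mono_on hab
              ((e.continuous.comp hWc').norm.intervalIntegrable _ _)
              ((continuous_const.mul hWc'.norm).intervalIntegrable _ _)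
            intro t _; exact e.le_opNorm _
        _ = ‖e‖ * ∫ t in a..b, ‖W n (i+1) t‖ := intervalIntegral.integral_const_mul _ _
        _ ≤ ‖e‖ * B0 := mul_le_mul_of_nonneg_left
            (aux_L1_bound hT hp hM hWc' (hbV n (i+1) hik) a b ha hab hbT) (norm_nonneg _)
        _ ≤ B := by nlinarith [norm_nonneg e]
    · subst hik
      have heq : f' n i = fun t => jH (iteratedDeriv (i+1) (fun s => e (u n s)) t) :=
        hcommH' n (i+1) le_rfl
      have h1 : ∫ t in a..b, ‖f' n i t‖ =
          ∫ t in a..b, ‖iteratedDeriv (i+1) (fun s => e (u n s)) t‖ := by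
        apply intervalIntegral.integral_congr
        intro s _
        simp only [heq, hjHnorm]
      rw [h1]
      have hcont : Continuous (iteratedDeriv (i+1) (fun s => e (u n s))) :=
        (husm' n).continuous_iteratedDeriv (i+1) (by exact_mod_cast le_rfl)
      exact (aux_L1_bound hT hp hM hcont (hbH n) a b ha hab hbT).trans hB0B
  constructor
  · -- first conjunct
    obtain ⟨φ, hφ, hcauchy⟩ := core_Lq ebar hcomp' E2 hE2 T hT q hq1 hq k W hWc f' hf'c hder
      B hB0 hWB hf'B
    refine ⟨φ, hφ, ?_⟩
    intro ε hε
    obtain ⟨N, hN⟩ := hcauchy ε hε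
    refine ⟨N, ?_⟩
    intro a ha b hb i hik
    have h1 := hN a ha b hb i hik
    have hfun : ∀ n, (fun t => iteratedDeriv i (fun s => e (u n s)) t) =
        fun t => e (W n i t) := fun n => hcommH n i hik
    have hnorm : (fun t => ‖iteratedDeriv i (fun s => e (u (φ a) s)) t -
          iteratedDeriv i (fun s => e (u (φ b) s)) t‖) =
        fun t => ‖ebar (W (φ a) i t) - ebar (W (φ b) i t)‖ := by
      funext t
      rw [congrFun (hfun (φ a)) t, congrFun (hfun (φ b)) t]
      rw [hebar, hebar, ← map_sub jH, hjHnorm]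
    calc eLpNorm (fun t => iteratedDeriv i (fun s => e (u (φ a) s)) t -
            iteratedDeriv i (fun s => e (u (φ b) s)) t) q (volume.restrict (Ioo (0:ℝ) T))
        = eLpNorm (fun t => ‖iteratedDeriv i (fun s => e (u (φ a) s)) t -
            iteratedDeriv i (fun s => e (u (φ b) s)) t‖) q (volume.restrict (Ioo (0:ℝ) T)) :=
          (eLpNorm_norm _).symm
      _ = eLpNorm (fun t => ‖ebar (W (φ a) i t) - ebar (W (φ b) i t)‖) q
            (volume.restrict (Ioo (0:ℝ) T)) := by rw [hnorm]
      _ = eLpNorm (fun t => ebar (W (φ a) i t) - ebar (W (φ b) i t)) q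
            (volume.restrict (Ioo (0:ℝ) T)) := eLpNorm_norm _
      _ < ENNReal.ofReal ε := h1
  · -- second conjunct
    intro hptop
    subst hptop
    have hWb : ∀ n i, i ≤ k → ∀ t ∈ Icc (0:ℝ) T, ‖W n i t‖ ≤ M.toReal := by
      intro n i hi
      apply aux_ae_to_pointwise hT (hWc n i hi)
      have h1 : eLpNormEssSup (W n i) (volume.restrict (Ioo (0:ℝ) T)) ≤ M := by
        rw [← eLpNorm_exponent_top]; exact hbV n i hi
      filter_upwards [MeasureTheory.ae_le_eLpNormEssSup
        (f := W n i) (μ := volume.restrict (Ioo (0:ℝ) T))] with t ht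
      have h2 : (‖W n i t‖₊ : ℝ≥0∞) ≤ M := le_trans (by exact_mod_cast ht) h1
      have h3 := ENNReal.toReal_mono hM h2
      rwa [ENNReal.coe_toReal, coe_nnnorm] at h3
    have hHb : ∀ n, ∀ t ∈ Icc (0:ℝ) T,
        ‖iteratedDeriv (k+1) (fun s => e (u n s)) t‖ ≤ M.toReal := by
      intro n
      apply aux_ae_to_pointwise hT
        ((husm' n).continuous_iteratedDeriv (k+1) (by exact_mod_cast le_rfl))
      have h1 : eLpNormEssSup (iteratedDeriv (k+1) (fun s => e (u n s)))
          (volume.restrict (Ioo (0:ℝ) T)) ≤ M := by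
        rw [← eLpNorm_exponent_top]; exact hbH n
      filter_upwards [MeasureTheory.ae_le_eLpNormEssSup
        (f := iteratedDeriv (k+1) (fun s => e (u n s)))
        (μ := volume.restrict (Ioo (0:ℝ) T))] with t ht
      have h2 : (‖iteratedDeriv (k+1) (fun s => e (u n s)) t‖₊ : ℝ≥0∞) ≤ M :=
        le_trans (by exact_mod_cast ht) h1
      have h3 := ENNReal.toReal_mono hM h2
      rwa [ENNReal.coe_toReal, coe_nnnorm] at h3
    set Cb : ℝ := (‖e‖ + 1) * (M.toReal + 1) with hCbdef
    have hM0 : 0 ≤ M.toReal := ENNReal.toReal_nonneg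
    have hMCb : M.toReal ≤ Cb := by nlinarith [norm_nonneg e]
    have hWb' : ∀ n i, i ≤ k → ∀ t ∈ Icc (0:ℝ) T, ‖W n i t‖ ≤ Cb :=
      fun n i hi t ht => (hWb n i hi t ht).trans hMCb
    have hf'b : ∀ n i, i ≤ k → ∀ t ∈ Icc (0:ℝ) T, ‖f' n i t‖ ≤ Cb := by
      intro n i hi t ht
      rcases lt_or_eq_of_le hi with hik | hik
      · have heq : f' n i = fun t => jH (e (W n (i+1) t)) := hcommH'' n (i+1) hik
        rw [heq, hjHnorm]
        calc ‖e (W n (i+1) t)‖ ≤ ‖e‖ * ‖W n (i+1) t‖ := e.le_opNorm _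
          _ ≤ ‖e‖ * M.toReal :=
            mul_le_mul_of_nonneg_left (hWb n (i+1) hik t ht) (norm_nonneg _)
          _ ≤ Cb := by nlinarith [norm_nonneg e]
      · subst hik
        have heq : f' n i = fun t => jH (iteratedDeriv (i+1) (fun s => e (u n s)) t) :=
          hcommH' n (i+1) le_rfl
        rw [heq, hjHnorm]
        exact (hHb n t ht).trans hMCb
    obtain ⟨φ, hφ, hcauchy⟩ := core_sup ebar hcomp' T hT k W hWc f' hder Cb hWb' hf'b
    refine ⟨φ, hφ, ?_⟩
    intro ε hε
    obtain ⟨N, hN⟩ := hcauchy ε hε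
    refine ⟨N, ?_⟩
    intro a ha b hb i hik t ht
    have h1 := hN a ha b hb i hik t ht
    have hfun : ∀ n, (fun t => iteratedDeriv i (fun s => e (u n s)) t) =
        fun t => e (W n i t) := fun n => hcommH n i hik
    rw [congrFun (hfun (φ a)) t, congrFun (hfun (φ b)) t]
    calc ‖e (W (φ a) i t) - e (W (φ b) i t)‖
        = ‖ebar (W (φ a) i t) - ebar (W (φ b) i t)‖ := by
          rw [hebar, hebar, ← map_sub jH, hjHnorm]
    _ < ε := h1
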